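/- arXiv:2201.09262 — 2 statements merged into one kernel-verified Lean document; each statement's English description precedes it below -/
import Mathlib

section
/- For every positive integer n, the multiple zeta value ζ(2,2,...,2) with n twos equals π^(2n)/(2n+1)!. -/
open Real Filter Finset

namespace ZetaTwoPow


noncomputable def a (k : ℕ) : ℝ := 1 / (k : ℝ) ^ 2

lemma summable_a : Summable a := Real.summable_one_div_nat_pow.mpr one_lt_two

lemma a_nonneg (k : ℕ) : 0 ≤ a k := by unfold a; positivity

noncomputable def B : ℝ := ∑' k : ℕ, a k

lemma B_nonneg : 0 ≤ B := tsum_nonneg a_nonneg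

noncomputable def e (r N : ℕ) : ℝ :=
  ∑ s ∈ (Finset.Icc 1 N).powersetCard r, ∏ k ∈ s, a k

lemma prodterm_nonneg (s : Finset ℕ) : 0 ≤ ∏ k ∈ s, a k :=
  Finset.prod_nonneg fun _ _ => a_nonneg _

lemma e_nonneg (r N : ℕ) : 0 ≤ e r N :=
  Finset.sum_nonneg fun s _ => prodterm_nonneg s

lemma card_Icc_one (N : ℕ) : (Finset.Icc 1 N).card = N := by
  rw [Nat.card_Icc]; omega

lemma e_zero (N : ℕ) : e 0 N = 1 := by
  simp [e]

lemma e_eq_zero_of_lt {r N : ℕ} (h : N < r) : e r N = 0 := by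
  rw [e, Finset.powersetCard_eq_empty.mpr (by rw [card_Icc_one]; exact h), Finset.sum_empty]

lemma Icc_succ (N : ℕ) : Finset.Icc 1 (N + 1) = insert (N + 1) (Finset.Icc 1 N) := by
  ext k
  simp only [Finset.mem_Icc, Finset.mem_insert]
  omega

lemma not_mem_Icc (N : ℕ) : N + 1 ∉ Finset.Icc 1 N := by simp

lemma e_succ_succ (r N : ℕ) : e (r + 1) (N + 1) = e (r + 1) N + a (N + 1) * e r N := by
  rw [e, Icc_succ, Finset.powersetCard_succ_insert (not_mem_Icc N)]
  rw [Finset.sum_union]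
  · congr 1
    rw [Finset.sum_image]
    · rw [e, Finset.mul_sum]
      refine Finset.sum_congr rfl fun s hs => ?_
      have hns : N + 1 ∉ s := fun hmem =>
        not_mem_Icc N ((Finset.mem_powersetCard.mp hs).1 hmem)
      rw [Finset.prod_insert hns]
    · intro s hs t ht hst
      have hns : N + 1 ∉ s := fun hmem =>
        not_mem_Icc N ((Finset.mem_powersetCard.mp hs).1 hmem)
      have hnt : N + 1 ∉ t := fun hmem =>
        not_mem_Icc N ((Finset.mem_powersetCard.mp ht).1 hmem)
      have := congrArg (Finset.erase · (N + 1)) hst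
      simpa [Finset.erase_insert hns, Finset.erase_insert hnt] using this
  · rw [Finset.disjoint_left]
    intro t ht ht'
    obtain ⟨s, hs, rfl⟩ := Finset.mem_image.mp ht'
    have : N + 1 ∈ insert (N + 1) s := Finset.mem_insert_self _ _
    exact not_mem_Icc N ((Finset.mem_powersetCard.mp ht).1 this)

lemma e_one (N : ℕ) : e 1 N = ∑ k ∈ Finset.Icc 1 N, a k := by
  rw [e, Finset.powersetCard_one, Finset.sum_map]
  simp

lemma e_one_le (N : ℕ) : e 1 N ≤ B := by
  rw [e_one]
  exact Summable.sum_le_tsum _ (fun k _ => a_nonneg k) summable_a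

lemma e_le (r N : ℕ) : e r N ≤ B ^ r := by
  induction r generalizing N with
  | zero => simp [e_zero]
  | succ r ih =>
    have key : ∀ M, e (r + 1) M ≤ e 1 M * B ^ r := by
      intro M
      induction M with
      | zero =>
        rw [e_eq_zero_of_lt (Nat.succ_pos r)]
        have h1 : e 1 0 = 0 := e_eq_zero_of_lt Nat.one_pos
        rw [h1, zero_mul]
      | succ M ihM =>
        rw [e_succ_succ, e_succ_succ 0 M, e_zero, mul_one, add_mul]
        gcongr
        · exact a_nonneg _
        · exact ih M
    calc e (r + 1) N ≤ e 1 N * B ^ r := key N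
      _ ≤ B * B ^ r := by
          have := e_one_le N
          have h0 : 0 ≤ e 1 N := by rw [e_one]; exact Finset.sum_nonneg fun k _ => a_nonneg k
          have hp : (0:ℝ) ≤ B ^ r := pow_nonneg B_nonneg r
          gcongr
      _ = B ^ (r + 1) := (pow_succ' B r).symm









lemma prod_eq_sum (N : ℕ) (x : ℝ) :
    ∏ k ∈ Finset.Icc 1 N, (1 - x ^ 2 / (k : ℝ) ^ 2)
      = ∑ r ∈ Finset.range (N + 1), (-1) ^ r * e r N * x ^ (2 * r) := by
  have h1 : ∀ k ∈ Finset.Icc 1 N, (1 : ℝ) - x ^ 2 / (k : ℝ) ^ 2 = (-x ^ 2) * a k + 1 := by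
    intro k _
    rw [a]
    ring
  rw [Finset.prod_congr rfl h1, Finset.prod_add]
  rw [Finset.sum_powerset, card_Icc_one]
  refine Finset.sum_congr rfl fun r _ => ?_
  rw [e, Finset.mul_sum, Finset.sum_mul]
  refine Finset.sum_congr rfl fun s hs => ?_
  have hcard : s.card = r := (Finset.mem_powersetCard.mp hs).2
  rw [Finset.prod_mul_distrib, Finset.prod_const, Finset.prod_const_one, mul_one, hcard]
  rw [neg_pow (x ^ 2) r, ← pow_mul, mul_comm 2 r]
  ring

lemma prod_Icc_eq_range (N : ℕ) (x : ℝ) :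
    ∏ k ∈ Finset.Icc 1 N, (1 - x ^ 2 / (k : ℝ) ^ 2)
      = ∏ j ∈ Finset.range N, (1 - x ^ 2 / ((j : ℝ) + 1) ^ 2) := by
  induction N with
  | zero => simp
  | succ N ih =>
    rw [Finset.prod_Icc_succ_top (by omega), ih, Finset.prod_range_succ]
    push_cast
    ring

lemma tendsto_prod (x : ℝ) (hx : x ≠ 0) :
    Tendsto (fun N : ℕ => ∏ k ∈ Finset.Icc 1 N, (1 - x ^ 2 / (k : ℝ) ^ 2)) atTop
      (nhds (Real.sin (π * x) / (π * x))) := by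
  have hπx : π * x ≠ 0 := mul_ne_zero Real.pi_ne_zero hx
  have h := (Real.tendsto_euler_sin_prod x).div_const (π * x)
  refine h.congr fun N => ?_
  rw [prod_Icc_eq_range, mul_comm (π * x), mul_div_assoc, div_self hπx, mul_one]








abbrev S (r : ℕ) := {f : Fin r → ℕ // StrictMono f ∧ ∀ i, 0 < f i}

noncomputable def g {r : ℕ} (f : S r) : ℝ := ∏ i, 1 / ((f.1 i : ℝ)) ^ 2

lemma g_nonneg {r : ℕ} (f : S r) : 0 ≤ g f :=
  Finset.prod_nonneg fun i _ => by positivity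

noncomputable def elt {r : ℕ} (s : Finset ℕ) (hc : s.card = r) (hpos : ∀ k ∈ s, 0 < k) : S r :=
  ⟨fun i => s.orderEmbOfFin hc i, (s.orderEmbOfFin hc).strictMono,
    fun i => hpos _ (s.orderEmbOfFin_mem hc i)⟩

lemma image_elt {r : ℕ} (s : Finset ℕ) (hc : s.card = r) (hpos : ∀ k ∈ s, 0 < k) :
    Finset.image (elt s hc hpos).1 Finset.univ = s := by
  apply Finset.coe_injective
  rw [Finset.coe_image, Finset.coe_univ, Set.image_univ]
  exact s.range_orderEmbOfFin hc

lemma g_elt {r : ℕ} (s : Finset ℕ) (hc : s.card = r) (hpos : ∀ k ∈ s, 0 < k) :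
    g (elt s hc hpos) = ∏ k ∈ s, a k := by
  calc g (elt s hc hpos) = ∏ i : Fin r, a ((elt s hc hpos).1 i) := rfl
    _ = ∏ k ∈ Finset.image (elt s hc hpos).1 Finset.univ, a k :=
        (Finset.prod_image fun x _ y _ hxy => (elt s hc hpos).2.1.injective hxy).symm
    _ = ∏ k ∈ s, a k := by rw [image_elt]

lemma elt_inj {r : ℕ} {s t : Finset ℕ} {hcs : s.card = r} {hct : t.card = r}
    {hps : ∀ k ∈ s, 0 < k} {hpt : ∀ k ∈ t, 0 < k}
    (h : elt s hcs hps = elt t hct hpt) : s = t := by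
  have h2 : Finset.image (elt s hcs hps).1 Finset.univ
      = Finset.image (elt t hct hpt).1 Finset.univ := by rw [h]
  rwa [image_elt, image_elt] at h2

noncomputable def T (r N : ℕ) : Finset (S r) :=
  ((Finset.Icc 1 N).powersetCard r).attach.image fun s =>
    elt s.1 (Finset.mem_powersetCard.mp s.2).2
      (fun k hk =>
        (Finset.mem_Icc.mp ((Finset.mem_powersetCard.mp s.2).1 hk)).1)

lemma sum_T (r N : ℕ) : ∑ f ∈ T r N, g f = e r N := by
  rw [T, Finset.sum_image (fun x _ y _ h => Subtype.ext (elt_inj h)), e,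
    ← Finset.sum_attach ((Finset.Icc 1 N).powersetCard r) (fun s => ∏ k ∈ s, a k)]
  exact Finset.sum_congr rfl fun s _ => g_elt _ _ _

lemma mono_T (r : ℕ) : Monotone (T r) := by
  intro N M hNM x hx
  obtain ⟨s, _, rfl⟩ := Finset.mem_image.mp hx
  have hmem : s.1 ∈ (Finset.Icc 1 M).powersetCard r :=
    Finset.powersetCard_mono (Finset.Icc_subset_Icc le_rfl hNM) s.2
  refine Finset.mem_image.mpr ⟨⟨s.1, hmem⟩, Finset.mem_attach _ _, ?_⟩
  exact Subtype.ext rfl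

lemma exists_mem_T {r : ℕ} (x : S r) : ∃ N, x ∈ T r N := by
  obtain ⟨f, hmono, hpos⟩ := x
  refine ⟨∑ i, f i, ?_⟩
  set s := Finset.image f Finset.univ with hs
  have hc : s.card = r := by
    rw [hs, Finset.card_image_of_injective _ hmono.injective, Finset.card_univ,
      Fintype.card_fin]
  have hsub : s ∈ (Finset.Icc 1 (∑ i, f i)).powersetCard r := by
    refine Finset.mem_powersetCard.mpr ⟨?_, hc⟩
    intro k hk
    obtain ⟨i, _, rfl⟩ := Finset.mem_image.mp hk
    exact Finset.mem_Icc.mpr ⟨hpos i,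
      Finset.single_le_sum (fun j _ => Nat.zero_le _) (Finset.mem_univ i)⟩
  refine Finset.mem_image.mpr ⟨⟨s, hsub⟩, Finset.mem_attach _ _, ?_⟩
  apply Subtype.ext
  have huniq := Finset.orderEmbOfFin_unique (f := f)
    (Finset.mem_powersetCard.mp hsub).2
    (fun i => Finset.mem_image_of_mem f (Finset.mem_univ i)) hmono
  exact huniq.symm

lemma summable_g (r : ℕ) : Summable (g (r := r)) := by
  apply summable_of_sum_le (c := B ^ r) (fun f => g_nonneg f)
  intro u
  choose Nf hNf using exists_mem_T (r := r)
  have hu : u ⊆ T r (u.sup Nf) := fun x hx => mono_T r (Finset.le_sup hx) (hNf x)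
  calc ∑ f ∈ u, g f ≤ ∑ f ∈ T r (u.sup Nf), g f :=
        Finset.sum_le_sum_of_subset_of_nonneg hu (fun f _ _ => g_nonneg f)
    _ = e r (u.sup Nf) := sum_T _ _
    _ ≤ B ^ r := e_le _ _

noncomputable def E (r : ℕ) : ℝ := ∑' f : S r, g f

lemma tendsto_e (r : ℕ) : Tendsto (fun N => e r N) atTop (nhds (E r)) := by
  rw [E]
  have hs : Tendsto (fun A : Finset (S r) => ∑ f ∈ A, g f) atTop
      (nhds (∑' f : S r, g f)) := (summable_g r).hasSum
  have ht : Tendsto (fun N => T r N) atTop atTop :=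
    tendsto_atTop_finset_of_monotone (mono_T r) (fun x => exists_mem_T x)
  exact (hs.comp ht).congr fun N => sum_T r N











lemma E_nonneg (r : ℕ) : 0 ≤ E r := tsum_nonneg g_nonneg

lemma E_le (r : ℕ) : E r ≤ B ^ r :=
  le_of_tendsto (tendsto_e r) (Filter.Eventually.of_forall (e_le r))

lemma series_eq (x : ℝ) (hx : x ≠ 0) (hxB : x ^ 2 * B < 1) :
    (∑' r : ℕ, (-1) ^ r * E r * x ^ (2 * r)) = Real.sin (π * x) / (π * x) := by
  have hbnd : ∀ (N r : ℕ), ‖(-1 : ℝ) ^ r * e r N * x ^ (2 * r)‖ ≤ (x ^ 2 * B) ^ r := by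
    intro N r
    rw [Real.norm_eq_abs, pow_mul, abs_mul, abs_mul, abs_pow, abs_pow, abs_neg, abs_one,
      one_pow, one_mul, abs_of_nonneg (e_nonneg r N), abs_of_nonneg (sq_nonneg x), mul_pow,
      mul_comm ((x ^ 2) ^ r) (B ^ r)]
    exact mul_le_mul_of_nonneg_right (e_le r N) (by positivity)
  have hTan := tendsto_tsum_of_dominated_convergence
    (f := fun (N : ℕ) (r : ℕ) => (-1 : ℝ) ^ r * e r N * x ^ (2 * r))
    (g := fun r : ℕ => (-1 : ℝ) ^ r * E r * x ^ (2 * r))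
    (bound := fun r : ℕ => (x ^ 2 * B) ^ r)
    (summable_geometric_of_lt_one (mul_nonneg (sq_nonneg x) B_nonneg) hxB)
    (fun r => (((tendsto_e r).const_mul _).mul_const _))
    (Filter.Eventually.of_forall fun N => hbnd N)
  have heq : ∀ N : ℕ, (∑' r : ℕ, (-1 : ℝ) ^ r * e r N * x ^ (2 * r))
      = ∏ k ∈ Finset.Icc 1 N, (1 - x ^ 2 / (k : ℝ) ^ 2) := by
    intro N
    rw [prod_eq_sum]
    apply tsum_eq_sum
    intro r hr
    rw [e_eq_zero_of_lt (by simpa using hr)]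
    ring
  exact tendsto_nhds_unique (hTan.congr heq) (tendsto_prod x hx)

lemma sin_div (x : ℝ) (hx : x ≠ 0) :
    Real.sin (π * x) / (π * x)
      = ∑' r : ℕ, (-1) ^ r * (π ^ (2 * r) / (Nat.factorial (2 * r + 1))) * x ^ (2 * r) := by
  have hπx : π * x ≠ 0 := mul_ne_zero Real.pi_ne_zero hx
  have h := (Real.hasSum_sin (π * x)).div_const (π * x)
  rw [← h.tsum_eq]
  refine tsum_congr fun r => ?_
  have hfac : ((Nat.factorial (2 * r + 1) : ℝ)) ≠ 0 := by positivity
  rw [pow_succ, mul_pow]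
  field_simp

lemma coeff_zero {c : ℕ → ℝ} {M K : ℝ} (hM : 0 ≤ M) (hK : 0 ≤ K)
    (hb : ∀ r, |c r| ≤ M * K ^ r)
    (h : ∀ t : ℝ, 0 < t → t * K < 1 → (∑' r : ℕ, c r * t ^ r) = 0) :
    ∀ r, c r = 0 := by
  intro m
  induction m using Nat.strong_induction_on with
  | _ m ih =>
  have hsum : ∀ (j : ℕ) (t : ℝ), 0 < t → t * K < 1 →
      Summable (fun r : ℕ => c (r + j) * t ^ r) := by
    intro j t ht htK
    apply Summable.of_norm_bounded (g := fun r : ℕ => (M * K ^ j) * (K * t) ^ r)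
      (((summable_geometric_of_lt_one (by positivity) (by linarith [mul_comm t K, (mul_comm t K ▸ htK : K * t < 1)])).mul_left _))
    intro r
    rw [Real.norm_eq_abs, abs_mul, abs_pow, abs_of_nonneg ht.le]
    calc |c (r + j)| * t ^ r ≤ (M * K ^ (r + j)) * t ^ r := by
          gcongr; exact hb _
      _ = (M * K ^ j) * (K * t) ^ r := by ring
  have key : ∀ t : ℝ, 0 < t → t * K < 1 →
      |c m| ≤ M * K ^ (m + 1) * t * (1 - K * t)⁻¹ := by
    intro t ht htK
    have hKt : K * t < 1 := by rw [mul_comm]; exact htK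
    have h0 := h t ht htK
    have hshift : (∑' r : ℕ, c (r + m) * t ^ (r + m)) = ∑' r : ℕ, c r * t ^ r := by
      have := Function.Injective.tsum_eq (g := fun r : ℕ => r + m)
        (f := fun r : ℕ => c r * t ^ r) (add_left_injective m) ?_
      · exact this
      · intro r hr
        rcases le_or_gt m r with hle | hlt
        · exact ⟨r - m, by simp; omega⟩
        · exfalso; apply hr; simp [ih r hlt]
    have hA : (∑' r : ℕ, c (r + m) * t ^ r) = 0 := by
      have h2 : (∑' r : ℕ, c (r + m) * t ^ (r + m))
          = t ^ m * ∑' r : ℕ, c (r + m) * t ^ r := by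
        rw [← tsum_mul_left]
        exact tsum_congr fun r => by ring
      have h3 : t ^ m * (∑' r : ℕ, c (r + m) * t ^ r) = 0 := by
        rw [← h2, hshift, h0]
      exact (mul_eq_zero.mp h3).resolve_left (pow_ne_zero m ht.ne')
    have h4 := Summable.tsum_eq_zero_add (hsum m t ht htK)
    simp only [Nat.zero_add, zero_add, pow_zero, mul_one] at h4
    have h5 : c m = -∑' r : ℕ, c (r + 1 + m) * t ^ (r + 1) := by
      rw [hA] at h4; linarith
    have hgeom : Summable (fun r : ℕ => (M * K ^ (m + 1) * t) * (K * t) ^ r) :=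
      (summable_geometric_of_lt_one (by positivity) hKt).mul_left _
    have hterm : ∀ r : ℕ, |c (r + 1 + m) * t ^ (r + 1)|
        ≤ (M * K ^ (m + 1) * t) * (K * t) ^ r := by
      intro r
      rw [abs_mul, abs_pow, abs_of_nonneg ht.le]
      calc |c (r + 1 + m)| * t ^ (r + 1) ≤ (M * K ^ (r + 1 + m)) * t ^ (r + 1) := by
            gcongr; exact hb _
        _ = (M * K ^ (m + 1) * t) * (K * t) ^ r := by ring
    have hs1 : Summable (fun r : ℕ => |c (r + 1 + m) * t ^ (r + 1)|) :=
      Summable.of_nonneg_of_le (fun r => abs_nonneg _) hterm hgeom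
    calc |c m| = |∑' r : ℕ, c (r + 1 + m) * t ^ (r + 1)| := by rw [h5, abs_neg]
      _ ≤ ∑' r : ℕ, |c (r + 1 + m) * t ^ (r + 1)| := by
          have hsn : Summable (fun r : ℕ => ‖c (r + 1 + m) * t ^ (r + 1)‖) := by
            simp only [Real.norm_eq_abs]; exact hs1
          have := norm_tsum_le_tsum_norm hsn
          simp only [Real.norm_eq_abs] at this
          exact this
      _ ≤ ∑' r : ℕ, (M * K ^ (m + 1) * t) * (K * t) ^ r := Summable.tsum_le_tsum hterm hs1 hgeom
      _ = M * K ^ (m + 1) * t * (1 - K * t)⁻¹ := by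
          rw [tsum_mul_left, tsum_geometric_of_lt_one (by positivity) hKt]
  have hev : ∀ᶠ t in nhdsWithin (0 : ℝ) (Set.Ioi 0),
      |c m| ≤ M * K ^ (m + 1) * t * (1 - K * t)⁻¹ := by
    have hpos : (0 : ℝ) < K + 1 := by linarith
    filter_upwards [Ioo_mem_nhdsGT_of_mem
      (show (0 : ℝ) ∈ Set.Ico (0 : ℝ) (1 / (K + 1)) from
        ⟨le_refl (0 : ℝ), one_div_pos.mpr hpos⟩)] with t ht
    have ht0 : 0 < t := ht.1
    have h1 : t * (K + 1) < 1 := by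
      have := (lt_div_iff₀ hpos).mp ht.2
      linarith
    have htK : t * K < 1 := by nlinarith
    exact key t ht0 htK
  have hlim : Tendsto (fun t : ℝ => M * K ^ (m + 1) * t * (1 - K * t)⁻¹)
      (nhdsWithin 0 (Set.Ioi 0)) (nhds 0) := by
    have hc : ContinuousAt (fun t : ℝ => M * K ^ (m + 1) * t * (1 - K * t)⁻¹) 0 := by
      apply ContinuousAt.mul
      · fun_prop
      · apply ContinuousAt.inv₀
        · fun_prop
        · norm_num
    have h2' : Tendsto (fun t : ℝ => M * K ^ (m + 1) * t * (1 - K * t)⁻¹)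
        (nhdsWithin 0 (Set.Ioi 0)) (nhds (M * K ^ (m + 1) * 0 * (1 - K * 0)⁻¹)) :=
      hc.continuousWithinAt (s := Set.Ioi 0)
    simpa using h2'
  have hle : |c m| ≤ 0 := ge_of_tendsto hlim hev
  exact abs_eq_zero.mp (le_antisymm hle (abs_nonneg _))

theorem main (n : ℕ) :
    E n = π ^ (2 * n) / (Nat.factorial (2 * n + 1)) := by
  set c : ℕ → ℝ := fun r =>
    (-1) ^ r * E r - (-1) ^ r * (π ^ (2 * r) / (Nat.factorial (2 * r + 1))) with hcdef
  have hπ2 : (0 : ℝ) ≤ π ^ 2 := sq_nonneg π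
  set K : ℝ := B + π ^ 2 with hKdef
  have hK0 : 0 ≤ K := add_nonneg B_nonneg hπ2
  have hBK : B ≤ K := le_add_of_nonneg_right hπ2
  have hπK : π ^ 2 ≤ K := le_add_of_nonneg_left B_nonneg
  have habs1 : ∀ r : ℕ, |(-1 : ℝ) ^ r * E r| = E r := fun r => by
    rw [abs_mul, abs_pow, abs_neg, abs_one, one_pow, one_mul, abs_of_nonneg (E_nonneg r)]
  have habs2 : ∀ r : ℕ, |(-1 : ℝ) ^ r * (π ^ (2 * r) / (Nat.factorial (2 * r + 1)))|
      = π ^ (2 * r) / (Nat.factorial (2 * r + 1)) := fun r => by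
    rw [abs_mul, abs_pow, abs_neg, abs_one, one_pow, one_mul, abs_of_nonneg (by positivity)]
  have hfacval : ∀ r : ℕ, π ^ (2 * r) / ((Nat.factorial (2 * r + 1)) : ℝ) ≤ (π ^ 2) ^ r := by
    intro r
    rw [← pow_mul]
    apply div_le_self (by positivity)
    exact_mod_cast Nat.one_le_iff_ne_zero.mpr (Nat.factorial_ne_zero _)
  have hb : ∀ r : ℕ, |c r| ≤ 2 * K ^ r := by
    intro r
    calc |c r| ≤ |(-1 : ℝ) ^ r * E r|
          + |(-1 : ℝ) ^ r * (π ^ (2 * r) / (Nat.factorial (2 * r + 1)))| := abs_sub _ _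
      _ = E r + π ^ (2 * r) / (Nat.factorial (2 * r + 1)) := by rw [habs1, habs2]
      _ ≤ B ^ r + (π ^ 2) ^ r := add_le_add (E_le r) (hfacval r)
      _ ≤ K ^ r + K ^ r :=
          add_le_add (pow_le_pow_left₀ B_nonneg hBK r) (pow_le_pow_left₀ hπ2 hπK r)
      _ = 2 * K ^ r := by ring
  have hzero : ∀ t : ℝ, 0 < t → t * K < 1 → (∑' r : ℕ, c r * t ^ r) = 0 := by
    intro t ht htK
    have hKt : K * t < 1 := by rw [mul_comm]; exact htK
    set x := Real.sqrt t with hxdef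
    have hx0 : x ≠ 0 := (Real.sqrt_pos.mpr ht).ne'
    have hx2 : x ^ 2 = t := Real.sq_sqrt ht.le
    have hxB : x ^ 2 * B < 1 := by
      rw [hx2]
      calc t * B ≤ t * K := mul_le_mul_of_nonneg_left hBK ht.le
        _ < 1 := htK
    have hmain := (series_eq x hx0 hxB).trans (sin_div x hx0)
    have hpow : ∀ r : ℕ, x ^ (2 * r) = t ^ r := fun r => by rw [pow_mul, hx2]
    have hgeom : Summable (fun r : ℕ => (K * t) ^ r) :=
      summable_geometric_of_lt_one (by positivity) hKt
    have hs1 : Summable (fun r : ℕ => (-1 : ℝ) ^ r * E r * t ^ r) := by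
      apply Summable.of_norm_bounded (g := fun r : ℕ => (K * t) ^ r) hgeom
      intro r
      rw [Real.norm_eq_abs, abs_mul, habs1, abs_pow, abs_of_nonneg ht.le, mul_pow]
      exact mul_le_mul_of_nonneg_right
        ((E_le r).trans (pow_le_pow_left₀ B_nonneg hBK r)) (by positivity)
    have hs2 : Summable (fun r : ℕ =>
        (-1 : ℝ) ^ r * (π ^ (2 * r) / (Nat.factorial (2 * r + 1))) * t ^ r) := by
      apply Summable.of_norm_bounded (g := fun r : ℕ => (K * t) ^ r) hgeom
      intro r
      rw [Real.norm_eq_abs, abs_mul, habs2, abs_pow, abs_of_nonneg ht.le, mul_pow]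
      exact mul_le_mul_of_nonneg_right
        ((hfacval r).trans (pow_le_pow_left₀ hπ2 hπK r)) (by positivity)
    have hsplit : (∑' r : ℕ, c r * t ^ r)
        = (∑' r : ℕ, (-1 : ℝ) ^ r * E r * t ^ r)
          - ∑' r : ℕ, (-1 : ℝ) ^ r * (π ^ (2 * r) / (Nat.factorial (2 * r + 1))) * t ^ r := by
      rw [← Summable.tsum_sub hs1 hs2]
      exact tsum_congr fun r => by rw [hcdef]; ring
    have hmain' : (∑' r : ℕ, (-1 : ℝ) ^ r * E r * t ^ r)
        = ∑' r : ℕ, (-1 : ℝ) ^ r * (π ^ (2 * r) / (Nat.factorial (2 * r + 1))) * t ^ r := by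
      calc (∑' r : ℕ, (-1 : ℝ) ^ r * E r * t ^ r)
          = ∑' r : ℕ, (-1 : ℝ) ^ r * E r * x ^ (2 * r) :=
            tsum_congr fun r => by rw [hpow]
        _ = ∑' r : ℕ, (-1 : ℝ) ^ r * (π ^ (2 * r) / (Nat.factorial (2 * r + 1)))
              * x ^ (2 * r) := hmain
        _ = _ := tsum_congr fun r => by rw [hpow]
    rw [hsplit, hmain', sub_self]
  have hcn := coeff_zero (by norm_num) hK0 hb hzero n
  have h2 : (-1 : ℝ) ^ n * E n
      = (-1) ^ n * (π ^ (2 * n) / (Nat.factorial (2 * n + 1))) := by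
    have := sub_eq_zero.mp hcn
    exact this
  exact mul_left_cancel₀ (pow_ne_zero n (neg_ne_zero.mpr one_ne_zero)) h2


end ZetaTwoPow

open Real

theorem zeta_two_pow (n : ℕ) (hn : 0 < n) :
    (∑' f : {f : Fin n → ℕ // StrictMono f ∧ ∀ i, 0 < f i},
      ∏ i, 1 / ((f.1 i : ℝ)) ^ 2) = π ^ (2 * n) / (Nat.factorial (2 * n + 1)) :=
  ZetaTwoPow.main n
end

section
/- For all nonnegative integers n and b, ∫₀^(π/2) cos^(2n)(x) · (2x)^(2b)/(2b)! dx = (C(2n,n)/4^n) · (π/2) · Σ_{n < m₁ < ... < m_b} 1/(m₁² ⋯ m_b²), where the empty sum (b = 0) is interpreted as 1. -/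
open Real

/-- `∑_{n < m₁ < ⋯ < m_b} 1/(m₁² ⋯ m_b²)`; equals `1` when `b = 0`. -/
noncomputable def zetaTail (b n : ℕ) : ℝ :=
  ∑' f : {f : Fin b → ℕ // StrictMono f ∧ ∀ i, n < f i}, ∏ i, 1 / ((f.1 i : ℝ)) ^ 2


noncomputable def cc (n : ℕ) : ℝ := (Nat.choose (2*n) n : ℝ) / 4 ^ n

lemma cc_pos (n : ℕ) : 0 < cc n := by
  have h : 0 < Nat.choose (2*n) n := Nat.choose_pos (by omega)
  unfold cc; positivity

lemma cc_succ (n : ℕ) : cc (n+1) = cc n * ((2*n+1)/(2*n+2)) := by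
  have h := Nat.succ_mul_centralBinom_succ n
  simp only [Nat.centralBinom] at h
  have h' : ((n:ℝ)+1) * (Nat.choose (2*(n+1)) (n+1)) = 2*(2*n+1)*(Nat.choose (2*n) n) := by
    exact_mod_cast h
  unfold cc
  have h4 : (4:ℝ)^(n+1) = 4^n * 4 := by ring
  field_simp [h4]
  linear_combination (2 * 4 ^ n : ℝ) * h'

lemma prod_eq_cc (n : ℕ) : ∏ i ∈ Finset.range n, (2*(i:ℝ)+1)/(2*i+2) = cc n := by
  induction n with
  | zero => simp [cc]
  | succ k ih => rw [Finset.prod_range_succ, ih, cc_succ]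

lemma wallis (n : ℕ) : (∫ x in (0:ℝ)..(π/2), cos x ^ (2*n)) = π/2 * cc n := by
  rw [EulerSine.integral_cos_pow_eq, integral_sin_pow_even, prod_eq_cc]; ring

noncomputable def AA (n b : ℕ) : ℝ := ∫ x in (0:ℝ)..(π/2), cos x ^ (2*n) * x ^ (2*b)

lemma ibp (n k : ℕ) :
    (∫ x in (0:ℝ)..(π/2),
      (cos x ^ (2*n) * sin x ^ 2 * x ^ (k+2)
        - (1/(2*(n:ℝ)+1)) * (cos x ^ (2*n+2) * x ^ (k+2))
        - (((k:ℝ)+2)*((k:ℝ)+1)/((2*(n:ℝ)+1)*(2*(n:ℝ)+2))) * (cos x ^ (2*n+2) * x ^ k))) = 0 := by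
  have hn1 : (2*(n:ℝ)+1) ≠ 0 := by positivity
  have hn2 : (2*(n:ℝ)+2) ≠ 0 := by positivity
  set F : ℝ → ℝ := fun x =>
    -(1/(2*(n:ℝ)+1)) * (cos x ^ (2*n+1) * sin x * x ^ (k+2))
    - (((k:ℝ)+2)/((2*(n:ℝ)+1)*(2*(n:ℝ)+2))) * (cos x ^ (2*n+2) * x ^ (k+1)) with hF
  have hderiv : ∀ x ∈ Set.uIcc (0:ℝ) (π/2),
      HasDerivAt F
        (cos x ^ (2*n) * sin x ^ 2 * x ^ (k+2)
        - (1/(2*(n:ℝ)+1)) * (cos x ^ (2*n+2) * x ^ (k+2))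
        - (((k:ℝ)+2)*((k:ℝ)+1)/((2*(n:ℝ)+1)*(2*(n:ℝ)+2))) * (cos x ^ (2*n+2) * x ^ k)) x := by
    intro x _
    have hc1 := (Real.hasDerivAt_cos x).pow (2*n+1)
    have hc2 := (Real.hasDerivAt_cos x).pow (2*n+2)
    simp only [Nat.add_sub_cancel] at hc1 hc2
    have h1 := ((hc1.mul (Real.hasDerivAt_sin x)).mul (hasDerivAt_pow (k+2) x)).const_mul
      (-(1/(2*(n:ℝ)+1)))
    have h2 := (hc2.mul (hasDerivAt_pow (k+1) x)).const_mul
      (((k:ℝ)+2)/((2*(n:ℝ)+1)*(2*(n:ℝ)+2)))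
    have h := h1.sub h2
    refine h.congr_deriv ?_
    simp only [Pi.pow_apply, Pi.mul_apply, Nat.add_sub_cancel]
    push_cast
    field_simp
    ring
  rw [intervalIntegral.integral_eq_sub_of_hasDerivAt hderiv (by
    apply Continuous.intervalIntegrable; fun_prop)]
  simp [hF, Real.cos_pi_div_two, zero_pow, Real.sin_zero]

lemma AA_rec (n b : ℕ) :
    AA n (b+1) = (2*(n:ℝ)+2)/(2*(n:ℝ)+1) * AA (n+1) (b+1)
      + ((2*(b:ℝ)+2)*(2*(b:ℝ)+1)/((2*(n:ℝ)+1)*(2*(n:ℝ)+2))) * AA (n+1) b := by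
  have hn1 : (2*(n:ℝ)+1) ≠ 0 := by positivity
  have key := ibp n (2*b)
  have e1 : 2*b+2 = 2*(b+1) := by ring
  have i1 : IntervalIntegrable (fun x => cos x ^ (2*n) * sin x ^ 2 * x ^ (2*b+2)) MeasureTheory.volume 0 (π/2) :=
    (by fun_prop : Continuous fun x : ℝ => cos x ^ (2*n) * sin x ^ 2 * x ^ (2*b+2)).intervalIntegrable _ _
  have i2 : IntervalIntegrable (fun x => (1/(2*(n:ℝ)+1)) * (cos x ^ (2*n+2) * x ^ (2*b+2))) MeasureTheory.volume 0 (π/2) :=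
    (by fun_prop : Continuous fun x : ℝ => (1/(2*(n:ℝ)+1)) * (cos x ^ (2*n+2) * x ^ (2*b+2))).intervalIntegrable _ _
  have i3 : IntervalIntegrable (fun x => ((2*(b:ℝ)+2)*(2*(b:ℝ)+1)/((2*(n:ℝ)+1)*(2*(n:ℝ)+2))) * (cos x ^ (2*n+2) * x ^ (2*b))) MeasureTheory.volume 0 (π/2) :=
    (by fun_prop : Continuous fun x : ℝ => ((2*(b:ℝ)+2)*(2*(b:ℝ)+1)/((2*(n:ℝ)+1)*(2*(n:ℝ)+2))) * (cos x ^ (2*n+2) * x ^ (2*b))).intervalIntegrable _ _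
  rw [show ((2*b:ℕ):ℝ) = 2*(b:ℝ) by push_cast; ring] at key
  rw [intervalIntegral.integral_sub (i1.sub i2) i3, intervalIntegral.integral_sub i1 i2,
    intervalIntegral.integral_const_mul, intervalIntegral.integral_const_mul,
    sub_sub, sub_eq_zero] at key
  -- key : ∫ cos^{2n} sin^2 x^{2b+2} = (1/(2n+1)) * ∫ cos^{2n+2} x^{2b+2} + C * ∫ cos^{2n+2} x^{2b}
  have split : (∫ x in (0:ℝ)..(π/2), cos x ^ (2*n) * sin x ^ 2 * x ^ (2*b+2))
      = AA n (b+1) - AA (n+1) (b+1) := by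
    have : ∀ x : ℝ, cos x ^ (2*n) * sin x ^ 2 * x ^ (2*b+2)
        = cos x ^ (2*(n:ℕ)) * x ^ (2*(b+1)) - cos x ^ (2*(n+1)) * x ^ (2*(b+1)) := by
      intro x
      have hs := Real.sin_sq x
      rw [show 2*(n+1) = 2*n+2 from by ring, show 2*(b+1) = 2*b+2 from by ring]
      rw [hs]; ring
    rw [intervalIntegral.integral_congr (fun x _ => this x)]
    unfold AA
    rw [intervalIntegral.integral_sub
      ((by fun_prop : Continuous fun x : ℝ => cos x ^ (2*(n:ℕ)) * x ^ (2*(b+1))).intervalIntegrable _ _)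
      ((by fun_prop : Continuous fun x : ℝ => cos x ^ (2*(n+1)) * x ^ (2*(b+1))).intervalIntegrable _ _)]
  rw [split] at key
  have hA1 : (∫ x in (0:ℝ)..(π/2), cos x ^ (2*n+2) * x ^ (2*b+2)) = AA (n+1) (b+1) := by
    unfold AA; rw [show 2*(n+1)=2*n+2 from by ring, show 2*(b+1)=2*b+2 from by ring]
  have hA2 : (∫ x in (0:ℝ)..(π/2), cos x ^ (2*n+2) * x ^ (2*b)) = AA (n+1) b := by
    unfold AA; rw [show 2*(n+1)=2*n+2 from by ring]
  rw [hA1, hA2] at key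
  have hn2 : (2*(n:ℝ)+2) ≠ 0 := by positivity
  field_simp at key ⊢
  linarith [key]

lemma AA_zero (n : ℕ) : AA n 0 = π/2 * cc n := by
  unfold AA
  rw [← wallis n]
  refine intervalIntegral.integral_congr fun x _ => ?_
  simp

lemma AA_nonneg (n b : ℕ) : 0 ≤ AA n b := by
  apply intervalIntegral.integral_nonneg (by positivity : (0:ℝ) ≤ π/2)
  intro x _
  exact mul_nonneg ((even_two_mul n).pow_nonneg _) ((even_two_mul b).pow_nonneg _)

lemma sinsq_int (N : ℕ) :
    (∫ x in (0:ℝ)..(π/2), cos x ^ (2*N) * sin x ^ 2) = π/2 * cc N * (1/(2*(N:ℝ)+2)) := by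
  have : ∀ x : ℝ, cos x ^ (2*N) * sin x ^ 2
      = cos x ^ (2*N) * x ^ (2*0) - cos x ^ (2*(N+1)) * x ^ (2*0) := by
    intro x
    rw [Real.sin_sq x, show 2*(N+1) = 2*N+2 from by ring]
    ring
  rw [intervalIntegral.integral_congr (fun x _ => this x),
    intervalIntegral.integral_sub
      ((by fun_prop : Continuous fun x : ℝ => cos x ^ (2*N) * x ^ (2*0)).intervalIntegrable _ _)
      ((by fun_prop : Continuous fun x : ℝ => cos x ^ (2*(N+1)) * x ^ (2*0)).intervalIntegrable _ _)]
  have e1 : (∫ x in (0:ℝ)..(π/2), cos x ^ (2*N) * x ^ (2*0)) = AA N 0 := rfl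
  have e2 : (∫ x in (0:ℝ)..(π/2), cos x ^ (2*(N+1)) * x ^ (2*0)) = AA (N+1) 0 := rfl
  rw [e1, e2, AA_zero, AA_zero, cc_succ]
  have h2 : (2*(N:ℝ)+2) ≠ 0 := by positivity
  field_simp
  ring

lemma AA_le (N b : ℕ) :
    AA N (b+1) ≤ (π/2)^(2*b+2) * (π/2 * cc N * (1/(2*(N:ℝ)+2))) := by
  rw [← sinsq_int N, ← intervalIntegral.integral_const_mul]
  apply intervalIntegral.integral_mono_on (by positivity : (0:ℝ) ≤ π/2)
    ((by fun_prop : Continuous fun x : ℝ => cos x ^ (2*N) * x ^ (2*(b+1))).intervalIntegrable _ _)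
    ((by fun_prop : Continuous fun x : ℝ => (π/2)^(2*b+2) * (cos x ^ (2*N) * sin x ^ 2)).intervalIntegrable _ _)
  intro x hx
  obtain ⟨hx0, hx1⟩ := hx
  have hs : x ≤ π/2 * sin x := by
    have h := Real.mul_le_sin hx0 hx1
    have hπ := Real.pi_pos
    calc x = π/2 * (2/π * x) := by field_simp
    _ ≤ π/2 * sin x := by nlinarith
  have hsq : x^2 ≤ (π/2)^2 * sin x ^ 2 := by
    calc x^2 ≤ (π/2 * sin x)^2 := by
          apply pow_le_pow_left₀ hx0 hs
    _ = (π/2)^2 * sin x ^ 2 := by ring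
  have hxb : x^(2*b) ≤ (π/2)^(2*b) := pow_le_pow_left₀ hx0 hx1 _
  have hcos : (0:ℝ) ≤ cos x ^ (2*N) := (even_two_mul N).pow_nonneg _
  have hxx : x^(2*(b+1)) ≤ (π/2)^(2*b+2) * sin x ^2 := by
    have e : x^(2*(b+1)) = x^(2*b) * x^2 := by ring
    have e2 : (π/2)^(2*b+2) * sin x ^2 = (π/2)^(2*b) * ((π/2)^2 * sin x ^2) := by ring
    rw [e, e2]
    apply mul_le_mul hxb hsq (by positivity) (by positivity)
  calc cos x ^ (2*N) * x^(2*(b+1)) ≤ cos x ^(2*N) * ((π/2)^(2*b+2) * sin x ^2) :=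
        mul_le_mul_of_nonneg_left hxx hcos
  _ = (π/2)^(2*b+2) * (cos x ^ (2*N) * sin x ^2) := by ring

noncomputable def KK (n b : ℕ) : ℝ := AA n b * (4^b / (Nat.factorial (2*b))) / (π/2 * cc n)

lemma KK_zero (n : ℕ) : KK n 0 = 1 := by
  have h1 : π/2 * cc n ≠ 0 := by
    have := cc_pos n; have := Real.pi_pos; positivity
  unfold KK
  rw [AA_zero]
  field_simp [Nat.factorial]
  rw [div_self (cc_pos n).ne']; simp

lemma KK_nonneg (n b : ℕ) : 0 ≤ KK n b := by
  have h1 : (0:ℝ) < π/2 * cc n := by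
    have := cc_pos n; have := Real.pi_pos; positivity
  have := AA_nonneg n b
  unfold KK
  positivity

lemma KK_rec (n b : ℕ) : KK n (b+1) = KK (n+1) (b+1) + KK (n+1) b / ((n:ℝ)+1)^2 := by
  have hπ := Real.pi_pos
  have hc := (cc_pos n).ne'
  have hc1 := (cc_pos (n+1)).ne'
  have hf : ((Nat.factorial (2*(b+1))):ℝ) = (2*(b:ℝ)+2)*(2*(b:ℝ)+1)*(Nat.factorial (2*b)) := by
    rw [show 2*(b+1) = (2*b+1)+1 from by ring, Nat.factorial_succ, Nat.factorial_succ]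
    push_cast; ring
  have hfb : ((Nat.factorial (2*b)):ℝ) ≠ 0 := by exact_mod_cast (Nat.factorial_pos _).ne'
  have h := AA_rec n b
  unfold KK
  rw [h, hf, cc_succ]
  have h1 : (2*(n:ℝ)+1) ≠ 0 := by positivity
  have h2 : (2*(n:ℝ)+2) ≠ 0 := by positivity
  have h3 : (2*(b:ℝ)+1) ≠ 0 := by positivity
  have h4 : (2*(b:ℝ)+2) ≠ 0 := by positivity
  have h5 : ((n:ℝ)+1) ≠ 0 := by positivity
  push_cast
  field_simp
  ring

lemma KK_le (N b : ℕ) : KK N (b+1) ≤ π^(2*b+2) / (2*(N:ℝ)+2) := by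
  have hπ := Real.pi_pos
  have hc := cc_pos N
  have h1 : (0:ℝ) < π/2 * cc N := by positivity
  have h := AA_le N b
  have hw : (0:ℝ) < (4:ℝ)^(b+1) / (Nat.factorial (2*(b+1))) := by positivity
  unfold KK
  rw [div_le_iff₀ h1]
  calc AA N (b+1) * (4^(b+1) / (Nat.factorial (2*(b+1))))
      ≤ ((π/2)^(2*b+2) * (π/2 * cc N * (1/(2*(N:ℝ)+2)))) * (4^(b+1) / (Nat.factorial (2*(b+1)))) := by
        apply mul_le_mul_of_nonneg_right h hw.le
  _ ≤ π^(2*b+2) / (2*(N:ℝ)+2) * (π/2 * cc N) := by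
        have hfac : (1:ℝ) ≤ (Nat.factorial (2*(b+1))) := by exact_mod_cast (Nat.factorial_pos _)
        have h4 : (4:ℝ)^(b+1) / (Nat.factorial (2*(b+1))) ≤ 4^(b+1) := by
          rw [div_le_iff₀ (by positivity)]
          nlinarith [pow_pos (by norm_num : (0:ℝ) < 4) (b+1)]
        have he : (π/2)^(2*b+2) * 4^(b+1) = π^(2*b+2) := by
          rw [div_pow, show (4:ℝ)^(b+1) = 2^(2*b+2) from by rw [show (4:ℝ)=2^2 from by norm_num, ← pow_mul]; ring_nf]
          field_simp
        have hN : (0:ℝ) < 2*(N:ℝ)+2 := by positivity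
        have expand : (π/2)^(2*b+2) * (π/2 * cc N * (1/(2*(N:ℝ)+2))) * (4^(b+1) / (Nat.factorial (2*(b+1))))
            = ((π/2)^(2*b+2) * (4^(b+1) / (Nat.factorial (2*(b+1))))) * (π/2 * cc N) / (2*(N:ℝ)+2) := by
          ring
        rw [expand, show π^(2*b+2) / (2*(N:ℝ)+2) * (π/2*cc N)
            = (π^(2*b+2) * (π/2*cc N)) / (2*(N:ℝ)+2) from by ring]
        apply div_le_div_of_nonneg_right ?_ hN.le
        apply mul_le_mul_of_nonneg_right ?_ h1.le
        calc (π/2)^(2*b+2) * (4^(b+1) / (Nat.factorial (2*(b+1)))) ≤ (π/2)^(2*b+2) * 4^(b+1) := by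
              apply mul_le_mul_of_nonneg_left h4 (by positivity)
        _ = π^(2*b+2) := he

open Filter Topology

noncomputable def FF (b n : ℕ) : {f : Fin b → ℕ // StrictMono f ∧ ∀ i, n < f i} → ℝ :=
  fun f => ∏ i, 1 / ((f.1 i : ℝ)) ^ 2

lemma zetaTail_eq_tsum (b n : ℕ) : zetaTail b n = ∑' f, FF b n f := rfl

lemma FF_nonneg (b n : ℕ) (f) : 0 ≤ FF b n f :=
  Finset.prod_nonneg fun i _ => by positivity

lemma zetaTail_nonneg (b n : ℕ) : 0 ≤ zetaTail b n := tsum_nonneg (FF_nonneg b n)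

instance uniq0 (n : ℕ) : Unique {f : Fin 0 → ℕ // StrictMono f ∧ ∀ i, n < f i} :=
  ⟨⟨⟨fun i => i.elim0, by intro a; exact a.elim0, fun i => i.elim0⟩⟩,
    fun f => Subtype.ext (funext fun i => i.elim0)⟩

lemma zetaTail_zero' (n : ℕ) : zetaTail 0 n = 1 := by
  unfold zetaTail
  rw [tsum_eq_single default fun b' hb' => absurd (Subsingleton.elim b' default) hb']
  simp

lemma cons_mem {b n : ℕ} (m : ℕ) (hm : n < m) (g : Fin b → ℕ) (hg : StrictMono g)
    (hgm : ∀ i, m < g i) :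
    StrictMono (Fin.cons m g : Fin (b+1) → ℕ) ∧ ∀ i, n < (Fin.cons m g : Fin (b+1) → ℕ) i := by
  constructor
  · intro a c h
    induction a using Fin.cases with
    | zero =>
      induction c using Fin.cases with
      | zero => exact absurd h (lt_irrefl _)
      | succ j => simpa using hgm j
    | succ i =>
      induction c using Fin.cases with
      | zero => exact absurd h (Fin.not_lt_zero _)
      | succ j =>
        simp only [Fin.cons_succ]
        exact hg (Fin.succ_lt_succ_iff.mp h)
  · intro i
    induction i using Fin.cases with
    | zero => simpa using hm
    | succ j => simpa using hm.trans (hgm j)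

noncomputable def consEquiv (b n : ℕ) :
    {f : Fin (b+1) → ℕ // StrictMono f ∧ ∀ i, n < f i} ≃
      (Σ m : {m : ℕ // n < m}, {g : Fin b → ℕ // StrictMono g ∧ ∀ i, m.1 < g i}) where
  toFun f := ⟨⟨f.1 0, f.2.2 0⟩, ⟨f.1 ∘ Fin.succ, f.2.1.comp Fin.strictMono_succ,
    fun i => f.2.1 (Fin.succ_pos i)⟩⟩
  invFun p := ⟨Fin.cons p.1.1 p.2.1, cons_mem p.1.1 p.1.2 p.2.1 p.2.2.1 p.2.2.2⟩
  left_inv f := by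
    apply Subtype.ext
    funext i
    induction i using Fin.cases with
    | zero => simp
    | succ j => simp
  right_inv p := by
    rcases p with ⟨⟨m, hm⟩, ⟨g, hg⟩⟩
    have h0 : (Fin.cons m g : Fin (b+1) → ℕ) 0 = m := Fin.cons_zero _ _
    refine Sigma.ext (Subtype.ext h0) ?_
    rw [Subtype.heq_iff_coe_eq]
    · funext i; simp
    · intro x
      rw [show ((⟨(Fin.cons m g : Fin (b+1) → ℕ) 0, cons_mem m hm g hg.1 hg.2 |>.2 0⟩ :
        {m : ℕ // n < m}) : ℕ) = m from h0]

lemma FF_comp (b n : ℕ)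
    (p : Σ m : {m : ℕ // n < m}, {g : Fin b → ℕ // StrictMono g ∧ ∀ i, m.1 < g i}) :
    FF (b+1) n ((consEquiv b n).symm p) = (1/((p.1.1:ℝ))^2) * FF b p.1.1 p.2 := by
  rcases p with ⟨m, g⟩
  show (∏ i, 1 / (((Fin.cons m.1 g.1 : Fin (b+1) → ℕ) i : ℝ)) ^ 2) = _
  rw [Fin.prod_univ_succ]
  simp [FF]

noncomputable def ZZ : ℝ := ∑' m : ℕ, 1 / ((m:ℝ))^2

lemma ZZ_summable : Summable (fun m : ℕ => 1 / ((m:ℝ))^2) :=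
  Real.summable_one_div_nat_pow.mpr one_lt_two

lemma ZZ_nonneg : 0 ≤ ZZ := tsum_nonneg fun m => by positivity

lemma sub_summable (n : ℕ) : Summable (fun m : {m : ℕ // n < m} => 1 / ((m.1:ℝ))^2) :=
  (ZZ_summable.subtype _)

lemma sub_tsum_le (n : ℕ) : (∑' m : {m : ℕ // n < m}, 1 / ((m.1:ℝ))^2) ≤ ZZ := by
  unfold ZZ
  exact Summable.tsum_le_tsum_of_inj (fun m => m.1) Subtype.coe_injective
    (fun c _ => by positivity) (fun i => le_refl _) (sub_summable n) ZZ_summable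

set_option maxHeartbeats 2000000 in
lemma big : ∀ b : ℕ, (∀ n, Summable (FF b n)) ∧ (∀ n, zetaTail b n ≤ ZZ ^ b) := by
  intro b
  induction b with
  | zero =>
    refine ⟨fun n => Summable.of_finite, fun n => ?_⟩
    rw [zetaTail_zero', pow_zero]
  | succ b ih =>
    obtain ⟨ihS, ihB⟩ := ih
    have hker : ∀ n, ∀ (p : Σ m : {m : ℕ // n < m},
        {g : Fin b → ℕ // StrictMono g ∧ ∀ i, m.1 < g i}),
        0 ≤ (1/((p.1.1:ℝ))^2) * FF b p.1.1 p.2 :=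
      fun n p => mul_nonneg (by positivity) (FF_nonneg _ _ _)
    have houter_eq : ∀ n (m : {m : ℕ // n < m}),
        (∑' g : {g : Fin b → ℕ // StrictMono g ∧ ∀ i, m.1 < g i},
          (1/((m.1:ℝ))^2) * FF b m.1 g) = (1/((m.1:ℝ))^2) * zetaTail b m.1 := by
      intro n m
      rw [tsum_mul_left]; rfl
    have houter_summable : ∀ n, Summable (fun m : {m : ℕ // n < m} =>
        (1/((m.1:ℝ))^2) * zetaTail b m.1) := by
      intro n
      apply Summable.of_nonneg_of_le
        (fun m => mul_nonneg (by positivity) (zetaTail_nonneg _ _))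
        (fun m => ?_) (((sub_summable n).mul_left (ZZ^b)))
      calc (1/((m.1:ℝ))^2) * zetaTail b m.1 ≤ (1/((m.1:ℝ))^2) * ZZ^b := by
            apply mul_le_mul_of_nonneg_left (ihB m.1) (by positivity)
      _ = ZZ^b * (1/((m.1:ℝ))^2) := by ring
    have hsig : ∀ n, Summable (fun p : Σ m : {m : ℕ // n < m},
        {g : Fin b → ℕ // StrictMono g ∧ ∀ i, m.1 < g i} =>
        (1/((p.1.1:ℝ))^2) * FF b p.1.1 p.2) := by
      intro n
      apply (summable_sigma_of_nonneg (hker n)).mpr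
      refine ⟨fun m => ?_, ?_⟩
      · exact (ihS m.1).mul_left (1/((m.1:ℝ))^2)
      apply ((houter_summable n).congr (fun m => (houter_eq n m).symm))
    have hS : ∀ n, Summable (FF (b+1) n) := by
      intro n
      have : Summable (FF (b+1) n ∘ (consEquiv b n).symm) :=
        (hsig n).congr (fun p => (FF_comp b n p).symm)
      exact ((consEquiv b n).symm.summable_iff).mp this
    refine ⟨hS, fun n => ?_⟩
    have hrec : zetaTail (b+1) n
        = ∑' m : {m : ℕ // n < m}, (1/((m.1:ℝ))^2) * zetaTail b m.1 := by
      rw [zetaTail_eq_tsum, ← ((consEquiv b n).symm.tsum_eq (FF (b+1) n)),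
        tsum_congr (FF_comp b n), Summable.tsum_sigma ((hsig n).congr (fun p => rfl))]
      exact tsum_congr (houter_eq n)
    rw [hrec]
    calc (∑' m : {m : ℕ // n < m}, (1/((m.1:ℝ))^2) * zetaTail b m.1)
        ≤ ∑' m : {m : ℕ // n < m}, ZZ^b * (1/((m.1:ℝ))^2) := by
          apply Summable.tsum_le_tsum ?_ (houter_summable n) ((sub_summable n).mul_left (ZZ^b))
          intro m
          calc (1/((m.1:ℝ))^2) * zetaTail b m.1 ≤ (1/((m.1:ℝ))^2) * ZZ^b :=
                mul_le_mul_of_nonneg_left (ihB m.1) (by positivity)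
          _ = ZZ^b * (1/((m.1:ℝ))^2) := by ring
    _ = ZZ^b * ∑' m : {m : ℕ // n < m}, (1/((m.1:ℝ))^2) := tsum_mul_left
    _ ≤ ZZ^b * ZZ := by
          exact mul_le_mul_of_nonneg_left (sub_tsum_le n) (pow_nonneg ZZ_nonneg b)
    _ = ZZ^(b+1) := by ring

set_option maxHeartbeats 2000000 in
lemma zetaTail_rec (b n : ℕ) : zetaTail (b+1) n
    = ∑' m : {m : ℕ // n < m}, (1/((m.1:ℝ))^2) * zetaTail b m.1 := by
  have hsig : Summable (FF (b+1) n ∘ (consEquiv b n).symm) :=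
    ((consEquiv b n).symm.summable_iff).mpr ((big (b+1)).1 n)
  have hsig' : Summable (fun p : Σ m : {m : ℕ // n < m},
      {g : Fin b → ℕ // StrictMono g ∧ ∀ i, m.1 < g i} =>
      (1/((p.1.1:ℝ))^2) * FF b p.1.1 p.2) :=
    hsig.congr (fun p => FF_comp b n p)
  rw [zetaTail_eq_tsum, ← ((consEquiv b n).symm.tsum_eq (FF (b+1) n)),
    tsum_congr (FF_comp b n), Summable.tsum_sigma (hsig'.congr (fun p => rfl))]
  refine tsum_congr fun m => ?_
  dsimp only
  rw [tsum_mul_left]; rfl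

lemma outer_summable (b n : ℕ) :
    Summable (fun m : {m : ℕ // n < m} => (1/((m.1:ℝ))^2) * zetaTail b m.1) := by
  apply Summable.of_nonneg_of_le
    (fun m => mul_nonneg (by positivity) (zetaTail_nonneg _ _))
    (fun m => ?_) ((sub_summable n).mul_left (ZZ^b))
  calc (1/((m.1:ℝ))^2) * zetaTail b m.1 ≤ (1/((m.1:ℝ))^2) * ZZ^b :=
        mul_le_mul_of_nonneg_left ((big b).2 m.1) (by positivity)
  _ = ZZ^b * (1/((m.1:ℝ))^2) := by ring

lemma zetaTail_hasSum (b n : ℕ) :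
    HasSum (fun m : ℕ => if n < m then zetaTail b m / ((m:ℝ))^2 else 0)
      (zetaTail (b+1) n) := by
  have hs : HasSum (fun m : {m : ℕ // n < m} => (1/((m.1:ℝ))^2) * zetaTail b m.1)
      (zetaTail (b+1) n) := by
    have h := (outer_summable b n).hasSum
    rwa [← zetaTail_rec b n] at h
  have hs' : HasSum ((fun m : ℕ => (1/((m:ℝ))^2) * zetaTail b m) ∘
      ((↑) : {m : ℕ | n < m} → ℕ)) (zetaTail (b+1) n) := hs
  have h2 := (hasSum_subtype_iff_indicator).mp hs'
  have hfe : (fun m : ℕ => if n < m then zetaTail b m / ((m:ℝ))^2 else 0)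
      = Set.indicator {m : ℕ | n < m} (fun m => (1/((m:ℝ))^2) * zetaTail b m) := by
    funext m
    rw [Set.indicator_apply]
    simp only [Set.mem_setOf_eq]
    by_cases h : n < m
    · rw [if_pos h, if_pos h]
      ring
    · rw [if_neg h, if_neg h]
  rw [hfe]
  exact h2

lemma KK_tendsto (b : ℕ) : Tendsto (fun N : ℕ => KK N (b+1)) atTop (𝓝 0) := by
  have h0 : Tendsto (fun N : ℕ => π^(2*b+2) / (2*(N:ℝ)+2)) atTop (𝓝 0) := by
    apply Tendsto.div_atTop tendsto_const_nhds
    apply Filter.tendsto_atTop_add_const_right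
    exact Filter.Tendsto.const_mul_atTop two_pos tendsto_natCast_atTop_atTop
  exact squeeze_zero (fun N => KK_nonneg N (b+1)) (fun N => KK_le N b) h0

lemma KK_eq (b n : ℕ) : KK n b = zetaTail b n := by
  induction b generalizing n with
  | zero => rw [KK_zero, zetaTail_zero']
  | succ b ih =>
    set g : ℕ → ℝ := fun j => if n < j then zetaTail b j / ((j:ℝ))^2 else 0 with hg
    have tele : ∀ N : ℕ, KK n (b+1) = KK (n+N) (b+1) + ∑ j ∈ Finset.range (n+N+1), g j := by
      intro N
      induction N with
      | zero =>
        have hz : ∑ j ∈ Finset.range (n+0+1), g j = 0 := by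
          apply Finset.sum_eq_zero
          intro j hj
          rw [Finset.mem_range] at hj
          rw [hg]
          simp only
          rw [if_neg (by omega)]
        rw [hz, add_zero, add_zero]
      | succ N ihN =>
        have hrec := KK_rec (n+N) b
        have hcast : ((n+N:ℕ):ℝ) + 1 = ((n+N+1:ℕ):ℝ) := by push_cast; ring
        rw [hcast] at hrec
        have hgv : g (n+N+1) = KK (n+N+1) b / (((n+N+1:ℕ)):ℝ)^2 := by
          rw [hg]
          simp only
          rw [if_pos (by omega), ih]
        rw [show n+(N+1) = (n+N)+1 from rfl]
        conv_rhs => rw [Finset.sum_range_succ]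
        rw [hgv, ihN, hrec]
        ring
    have t1 : Tendsto (fun N : ℕ => KK (n+N) (b+1)) atTop (𝓝 0) := by
      have := (KK_tendsto b).comp (tendsto_add_atTop_nat n)
      exact this.congr (fun N => by simp [add_comm])
    have t2 : Tendsto (fun N : ℕ => ∑ j ∈ Finset.range (n+N+1), g j) atTop
        (𝓝 (zetaTail (b+1) n)) := by
      have hsum := (zetaTail_hasSum b n).tendsto_sum_nat
      refine hsum.comp ?_
      exact tendsto_atTop_mono (fun N => by omega : ∀ N : ℕ, N ≤ n+N+1) tendsto_id
    have t3 := t1.add t2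
    rw [zero_add] at t3
    exact tendsto_nhds_unique (tendsto_const_nhds.congr (fun N => tele N)) t3

theorem cos_even_moments' (n b : ℕ) :
    (∫ x in (0:ℝ)..(π / 2), cos x ^ (2 * n) *
        ((2 * x) ^ (2 * b) / (Nat.factorial (2 * b)))) =
      ((Nat.choose (2 * n) n : ℝ) / 4 ^ n) * (π / 2) * zetaTail b n := by
  have h1 : (∫ x in (0:ℝ)..(π / 2), cos x ^ (2 * n) *
      ((2 * x) ^ (2 * b) / (Nat.factorial (2 * b))))
      = (4^b/((Nat.factorial (2*b)):ℝ)) * AA n b := by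
    unfold AA
    rw [← intervalIntegral.integral_const_mul]
    refine intervalIntegral.integral_congr fun x _ => ?_
    rw [mul_pow, show (2:ℝ)^(2*b) = 4^b from by rw [pow_mul]; norm_num]
    ring
  rw [h1]
  have h2 := KK_eq b n
  unfold KK at h2
  have h3 : π/2 * cc n ≠ 0 := by
    have := cc_pos n; have := Real.pi_pos; positivity
  have h4 : AA n b * (4^b/((Nat.factorial (2*b)):ℝ)) = zetaTail b n * (π/2 * cc n) := by
    exact (div_eq_iff h3).mp h2
  calc (4^b/((Nat.factorial (2*b)):ℝ)) * AA n b
      = AA n b * (4^b/((Nat.factorial (2*b)):ℝ)) := by ring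
  _ = zetaTail b n * (π/2 * cc n) := h4
  _ = ((Nat.choose (2 * n) n : ℝ) / 4 ^ n) * (π / 2) * zetaTail b n := by
        unfold cc; ring


theorem cos_even_moments (n b : ℕ) :
    (∫ x in (0:ℝ)..(π / 2), Real.cos x ^ (2 * n) *
        ((2 * x) ^ (2 * b) / (Nat.factorial (2 * b)))) =
      ((Nat.choose (2 * n) n : ℝ) / 4 ^ n) * (π / 2) * zetaTail b n :=
  cos_even_moments' n b
end
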